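/- Let W be a 2×2 Hermitian positive semidefinite matrix with W₁₁ W₂₂ > |W₁₂|², and let α ∈ ℝ. Define b := Re(W₁₂ e^{i(π/2 − α)}) and c := W₁₁W₂₂ − |W₁₂|² > 0. Then r := √(b² + c) − b is strictly positive, and the matrix Ŵ with Ŵ₁₁ = W₁₁, Ŵ₂₂ = W₂₂, Ŵ₁₂ = W₁₂ + r e^{−i(π/2 − α)} (and Ŵ₂₁ = Ŵ₁₂^H) is positive semidefinite of rank 1, i.e., Ŵ₁₁ Ŵ₂₂ = |Ŵ₁₂|². -/

import Mathlib

open Real Complex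

/-- Rank-one correction of a 2×2 Hermitian psd matrix: given diagonal entries
W₁₁, W₂₂ ≥ 0 and off-diagonal W₁₂ with W₁₁W₂₂ > |W₁₂|², setting
r = √(b² + c) − b with b = Re(W₁₂ e^{i(π/2−α)}) and c = W₁₁W₂₂ − |W₁₂|²,
we have r > 0 and the modified matrix with off-diagonal
W₁₂ + r e^{−i(π/2−α)} satisfies W₁₁W₂₂ = |Ŵ₁₂|², i.e., it is psd of rank 1. -/
theorem rankOne_correction (W11 W22 : ℝ) (hW11 : 0 ≤ W11) (hW22 : 0 ≤ W22)
    (W12 : ℂ) (α : ℝ) (h : ‖W12‖ ^ 2 < W11 * W22) :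
    let b : ℝ := (W12 * Complex.exp (Complex.I * ((π / 2 : ℝ) - α))).re
    let c : ℝ := W11 * W22 - ‖W12‖ ^ 2
    let r : ℝ := Real.sqrt (b ^ 2 + c) - b
    0 < r ∧
    W11 * W22 = ‖W12 + r * Complex.exp (-Complex.I * ((π / 2 : ℝ) - α))‖ ^ 2 := by
  intro b c r
  have hc : 0 < c := by simpa [c] using sub_pos.mpr h
  have hb2c : b ^ 2 ≤ b ^ 2 + c := by linarith
  have hsq : Real.sqrt (b ^ 2 + c) ^ 2 = b ^ 2 + c :=
    Real.sq_sqrt (by positivity)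
  have hr : 0 < r := by
    have hblt : b < Real.sqrt (b ^ 2 + c) := by
      have hb : b ≤ |b| := le_abs_self b
      have : |b| < Real.sqrt (b ^ 2 + c) := by
        rw [← Real.sqrt_sq_eq_abs]
        exact Real.sqrt_lt_sqrt (by positivity) (by linarith)
      linarith
    simpa [r] using sub_pos.mpr hblt
  refine ⟨hr, ?_⟩
  set θ : ℂ := (((π / 2 : ℝ) : ℂ) - (α : ℂ))
  have hθ : (starRingEnd ℂ) (Complex.exp (-Complex.I * θ)) = Complex.exp (Complex.I * θ) := by
    rw [← Complex.exp_conj]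
    congr 1
    simp [θ]
    norm_num [map_ofNat]
  have hnormE : Complex.normSq (Complex.exp (-Complex.I * θ)) = 1 := by
    rw [Complex.normSq_eq_norm_sq, Complex.norm_exp]
    simp [θ]
  have key : ‖W12 + ↑r * Complex.exp (-Complex.I * θ)‖ ^ 2
      = ‖W12‖ ^ 2 + r ^ 2 + 2 * r * b := by
    rw [Complex.sq_norm, Complex.sq_norm, Complex.normSq_add]
    have : (W12 * (starRingEnd ℂ) ((r : ℂ) * Complex.exp (-Complex.I * θ))).re
        = r * b := by
      rw [map_mul, hθ, Complex.conj_ofReal,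
        show W12 * ((r:ℂ) * Complex.exp (Complex.I * θ)) =
          (r:ℂ) * (W12 * Complex.exp (Complex.I * θ)) by ring]
      simp [b, θ]
    rw [this, Complex.normSq_mul, hnormE]
    simp [Complex.normSq_ofReal]
    ring
  have hrc : r ^ 2 + 2 * r * b = c := by
    have : (r + b) ^ 2 = b ^ 2 + c := by
      have : r + b = Real.sqrt (b ^ 2 + c) := by simp [r]
      rw [this, hsq]
    nlinarith [this]
  rw [key]
  simp only [c] at hrc
  linarith
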